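/- Let m_P, m_Q ∈ ℝ with m_P ≠ m_Q and σ_P, σ_Q ≥ 0. Set a := m_P − m_Q, b := σ_Q² − σ_P², v := (1/(2|a|))√(b² + 2a²(σ_P² + σ_Q²) + a⁴), r := 1/2 + (b + a²)/(4av), s := 1/2 + (b − a²)/(4av), and define g(x) := (1+x)/(1+√x)² for x ≥ 0, l := a²/(2(a² + 2(σ_P² + σ_Q²))), β_max := 2·max(g(s/r), g((1−s)/(1−r))), β_min := 2·min(g(s/r), g((1−s)/(1−r))). Then β_min · l ≤ h²(r,s) ≤ β_max · l, where h²(r,s) := (1/2)((√r − √s)² + (√(1−r) − √(1−s))²). -/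

import Mathlib

open Real

/-- The binary squared Hellinger distance
`h²(r,s) = (1/2)((√r − √s)² + (√(1−r) − √(1−s))²)`. -/
noncomputable def binaryH (r s : ℝ) : ℝ :=
  (1 / 2) * ((Real.sqrt r - Real.sqrt s) ^ 2 +
    (Real.sqrt (1 - r) - Real.sqrt (1 - s)) ^ 2)

/-- `g(x) = (1 + x)/(1 + √x)²`. -/
noncomputable def gFun (x : ℝ) : ℝ := (1 + x) / (1 + Real.sqrt x) ^ 2

lemma sq_sqrt_sub (r s : ℝ) (hr : 0 ≤ r) (hs : 0 ≤ s) :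
    (Real.sqrt r - Real.sqrt s)^2 = (r - s)^2 * gFun (s / r) / (r + s) := by
  rcases hr.eq_or_lt with h0 | h0
  · rw [← h0]
    simp only [gFun, div_zero, Real.sqrt_zero, add_zero, zero_add, zero_sub, zero_div]
    rcases hs.eq_or_lt with h1 | h1
    · rw [← h1]; simp
    · rw [neg_sq, Real.sq_sqrt hs]
      rw [neg_sq, one_pow, div_one, mul_one, pow_two, mul_div_assoc,
        div_self h1.ne', mul_one]
  · have hx : 0 < Real.sqrt r := Real.sqrt_pos.mpr h0
    have hy : 0 ≤ Real.sqrt s := Real.sqrt_nonneg s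
    have hxy : 0 < Real.sqrt r + Real.sqrt s := by linarith
    have h1 : Real.sqrt (s / r) = Real.sqrt s / Real.sqrt r := Real.sqrt_div hs r
    have hr2 : Real.sqrt r ^ 2 = r := Real.sq_sqrt hr
    have hs2 : Real.sqrt s ^ 2 = s := Real.sq_sqrt hs
    have hg : gFun (s/r) = (r + s) / (Real.sqrt r + Real.sqrt s)^2 := by
      rw [gFun, h1, div_eq_div_iff (by positivity) (by positivity)]
      field_simp
      exact hr2
    rw [hg]
    have hd : (r - s)^2 = (Real.sqrt r - Real.sqrt s)^2 * (Real.sqrt r + Real.sqrt s)^2 := by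
      rw [← mul_pow]
      linear_combination (-(r - s) - (Real.sqrt r^2 - Real.sqrt s^2)) * hr2 +
        ((r - s) + (Real.sqrt r^2 - Real.sqrt s^2)) * hs2
    rw [hd]
    field_simp

set_option maxHeartbeats 1000000 in
theorem binaryH_compare_bounds
    (mP mQ σP σQ : ℝ) (hne : mP ≠ mQ) (hσP : 0 ≤ σP) (hσQ : 0 ≤ σQ)
    (a b v r s l βmin βmax : ℝ)
    (ha : a = mP - mQ) (hb : b = σQ ^ 2 - σP ^ 2)
    (hv : v = (1 / (2 * |a|)) *
      Real.sqrt (b ^ 2 + 2 * a ^ 2 * (σP ^ 2 + σQ ^ 2) + a ^ 4))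
    (hr : r = 1 / 2 + (b + a ^ 2) / (4 * a * v))
    (hs : s = 1 / 2 + (b - a ^ 2) / (4 * a * v))
    (hl : l = a ^ 2 / (2 * (a ^ 2 + 2 * (σP ^ 2 + σQ ^ 2))))
    (hβmax : βmax = 2 * max (gFun (s / r)) (gFun ((1 - s) / (1 - r))))
    (hβmin : βmin = 2 * min (gFun (s / r)) (gFun ((1 - s) / (1 - r)))) :
    βmin * l ≤ binaryH r s ∧ binaryH r s ≤ βmax * l := by
  have ha0 : a ≠ 0 := by rw [ha]; exact sub_ne_zero.mpr hne
  have ha2 : 0 < a ^ 2 := by positivity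
  have hrad : 0 < b ^ 2 + 2 * a ^ 2 * (σP ^ 2 + σQ ^ 2) + a ^ 4 := by positivity
  obtain ⟨D, hD⟩ : ∃ x, x = Real.sqrt (b ^ 2 + 2 * a ^ 2 * (σP ^ 2 + σQ ^ 2) + a ^ 4) :=
    ⟨_, rfl⟩
  rw [← hD] at hv
  have hDpos : 0 < D := hD ▸ Real.sqrt_pos.mpr hrad
  have hD2 : D ^ 2 = b ^ 2 + 2 * a ^ 2 * (σP ^ 2 + σQ ^ 2) + a ^ 4 :=
    hD ▸ Real.sq_sqrt hrad.le
  obtain ⟨w, hw⟩ : ∃ x, x = 4 * a * v := ⟨_, rfl⟩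
  rw [← hw] at hr hs
  have habs : (0:ℝ) < |a| := abs_pos.mpr ha0
  have hv2 : v ^ 2 = D ^ 2 / (4 * a ^ 2) := by
    rw [hv, mul_pow, div_pow, mul_pow, sq_abs]
    ring
  have hw2 : w ^ 2 = 4 * D ^ 2 := by
    have h16 : w ^ 2 = 16 * a ^ 2 * v ^ 2 := by rw [hw]; ring
    rw [h16, hv2]
    field_simp
    ring
  have hw0 : w ≠ 0 := by
    intro h0
    rw [h0] at hw2
    nlinarith [hDpos]
  have hsub : r - s = 2 * a ^ 2 / w := by rw [hr, hs]; ring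
  have hadd : r + s = 1 + 2 * b / w := by rw [hr, hs]; ring
  have hsub2 : (r - s) ^ 2 = a ^ 4 / D ^ 2 := by
    rw [hsub, div_pow, hw2, div_eq_div_iff (by positivity) (by positivity)]
    ring
  have hD2b : b ^ 2 < D ^ 2 := by
    nlinarith [hD2, ha2, mul_pos ha2 ha2,
      mul_nonneg ha2.le (add_nonneg (sq_nonneg σP) (sq_nonneg σQ))]
  have ht2 : (2 * b / w) ^ 2 = b ^ 2 / D ^ 2 := by
    rw [div_pow, hw2, div_eq_div_iff (by positivity) (by positivity)]
    ring
  have ht1 : (2 * b / w) ^ 2 < 1 := by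
    rw [ht2]
    exact (div_lt_one (by positivity)).mpr hD2b
  have ht1' : |2 * b / w| < 1 := by
    exact (sq_lt_one_iff_abs_lt_one _).mp ht1
  have ht1l := (abs_lt.mp ht1').1
  have ht1r := (abs_lt.mp ht1').2
  have haddpos : 0 < r + s := by
    rw [hadd]; linarith
  have hsubpos : 0 < 2 - r - s := by
    have e2 : 2 - r - s = 1 - 2 * b / w := by rw [hr, hs]; ring
    rw [e2]; linarith
  have hprod : (r + s) * (2 - r - s) = (D ^ 2 - b ^ 2) / D ^ 2 := by
    have e2 : 2 - r - s = 1 - 2 * b / w := by rw [hr, hs]; ring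
    rw [hadd, e2]
    have e3 : (1 + 2 * b / w) * (1 - 2 * b / w) = 1 - (2 * b / w) ^ 2 := by ring
    rw [e3, ht2]
    field_simp
  have hba : (b + a ^ 2) ^ 2 ≤ D ^ 2 := by
    nlinarith [hD2, mul_nonneg ha2.le (sq_nonneg σP)]
  have hbs : (b - a ^ 2) ^ 2 ≤ D ^ 2 := by
    nlinarith [hD2, mul_nonneg ha2.le (sq_nonneg σQ)]
  have hc2 : ((b + a ^ 2) / w) ^ 2 ≤ 1 / 4 := by
    rw [div_pow, hw2, div_le_div_iff₀ (by positivity) (by norm_num)]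
    nlinarith [hba]
  have hd2 : ((b - a ^ 2) / w) ^ 2 ≤ 1 / 4 := by
    rw [div_pow, hw2, div_le_div_iff₀ (by positivity) (by norm_num)]
    nlinarith [hbs]
  have hc2' : |(b + a ^ 2) / w| ≤ 1 / 2 :=
    abs_le_of_sq_le_sq (by norm_num; linarith [hc2]) (by norm_num)
  have hd2' : |(b - a ^ 2) / w| ≤ 1 / 2 :=
    abs_le_of_sq_le_sq (by norm_num; linarith [hd2]) (by norm_num)
  have hr0 : 0 ≤ r := by
    rw [hr]; have := (abs_le.mp hc2').1; linarith
  have hr1 : r ≤ 1 := by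
    rw [hr]; have := (abs_le.mp hc2').2; linarith
  have hs0 : 0 ≤ s := by
    rw [hs]; have := (abs_le.mp hd2').1; linarith
  have hs1 : s ≤ 1 := by
    rw [hs]; have := (abs_le.mp hd2').2; linarith
  have hdecomp : binaryH r s = (1 / 2) * ((r - s) ^ 2 * gFun (s / r) / (r + s) +
      (r - s) ^ 2 * gFun ((1 - s) / (1 - r)) / (2 - r - s)) := by
    rw [binaryH, sq_sqrt_sub r s hr0 hs0,
      sq_sqrt_sub (1 - r) (1 - s) (by linarith) (by linarith)]
    have e1 : ((1 - r) - (1 - s)) ^ 2 = (r - s) ^ 2 := by ring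
    have e2 : (1 - r) + (1 - s) = 2 - r - s := by ring
    rw [e1, e2]
  have hDb : D ^ 2 - b ^ 2 = a ^ 2 * (a ^ 2 + 2 * (σP ^ 2 + σQ ^ 2)) := by
    linear_combination hD2
  have hS : 0 < a ^ 2 + 2 * (σP ^ 2 + σQ ^ 2) := by positivity
  have hAB : (r - s) ^ 2 / (r + s) + (r - s) ^ 2 / (2 - r - s) = 4 * l := by
    have key : (r - s) ^ 2 / (r + s) + (r - s) ^ 2 / (2 - r - s)
        = 2 * ((r - s) ^ 2 / ((r + s) * (2 - r - s))) := by
      field_simp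
      ring
    rw [key, hsub2, hprod, hl, hDb]
    rw [div_div_div_eq]
    field_simp
    ring
  obtain ⟨X, hX⟩ : ∃ x, x = (r - s) ^ 2 / (r + s) := ⟨_, rfl⟩
  obtain ⟨Y, hY⟩ : ∃ x, x = (r - s) ^ 2 / (2 - r - s) := ⟨_, rfl⟩
  have hA : 0 ≤ X := hX ▸ div_nonneg (sq_nonneg _) haddpos.le
  have hB : 0 ≤ Y := hY ▸ div_nonneg (sq_nonneg _) hsubpos.le
  have hl4 : l = (X + Y) / 4 := by rw [hX, hY]; linarith [hAB]
  have hdecomp' : binaryH r s = 1 / 2 * (gFun (s / r) * X + gFun ((1 - s) / (1 - r)) * Y) := by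
    rw [hdecomp, hX, hY]; ring
  constructor
  · rw [hβmin, hdecomp', hl4]
    have h1 := min_le_left (gFun (s / r)) (gFun ((1 - s) / (1 - r)))
    have h2 := min_le_right (gFun (s / r)) (gFun ((1 - s) / (1 - r)))
    linarith [mul_le_mul_of_nonneg_right h1 hA, mul_le_mul_of_nonneg_right h2 hB]
  · rw [hβmax, hdecomp', hl4]
    have h1 := le_max_left (gFun (s / r)) (gFun ((1 - s) / (1 - r)))
    have h2 := le_max_right (gFun (s / r)) (gFun ((1 - s) / (1 - r)))
    linarith [mul_le_mul_of_nonneg_right h1 hA, mul_le_mul_of_nonneg_right h2 hB]
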